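/- Let P be a finite set of points in ℝ² and let 0 < α ≤ 1. For S ⊆ P, define r_S : P → ℝ by r_S(p) = α if p ∈ S and r_S(p) = 1 otherwise, and let G_S be the closed-disk intersection graph of (P, r_S); call S a solution if G_S is connected. Let v ∈ P and let S be a solution of maximum cardinality among all solutions. Then |{u ∈ P : dist(u,v) ≤ 2} \ S| ≤ 9(4/α + 1)² + 9. -/

import Mathlib

open scoped Classical

abbrev Pt := EuclideanSpace ℝ (Fin 2)

/-- The closed-disk intersection graph of the points of `P` with radius assignment `r`:
distinct points `p, q ∈ P` are adjacent iff `dist p q ≤ r p + r q`. -/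
def closedDiskGraph (P : Finset Pt) (r : Pt → ℝ) : SimpleGraph {x : Pt // x ∈ P} where
  Adj p q := p ≠ q ∧ dist (p : Pt) (q : Pt) ≤ r p + r q
  symm := ⟨fun p q h => ⟨h.1.symm, by rw [dist_comm, add_comm]; exact h.2⟩⟩
  loopless := ⟨fun p h => h.1 rfl⟩

namespace Stmt17Aux

variable {P : Finset Pt} {α : ℝ} {S : Finset Pt}

/-- radius function -/
noncomputable def rad (α : ℝ) (S : Finset Pt) : Pt → ℝ := fun x => if x ∈ S then α else 1

lemma rad_ge (hα₁ : α ≤ 1) (x : Pt) : α ≤ rad α S x := by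
  unfold rad; split <;> linarith

lemma rad_le (hα₁ : α ≤ 1) (x : Pt) : rad α S x ≤ 1 := by
  unfold rad; split <;> linarith

lemma rad_notS {x : Pt} (h : x ∉ S) : rad α S x = 1 := if_neg h

lemma rad_insert_self (w : Pt) : rad α (insert w S) w = α :=
  if_pos (Finset.mem_insert_self w S)

lemma rad_insert_ne {x w : Pt} (h : x ≠ w) : rad α (insert w S) x = rad α S x := by
  unfold rad; simp [Finset.mem_insert, h]

lemma rad_insert_le (hα₁ : α ≤ 1) (w x : Pt) : rad α (insert w S) x ≤ rad α S x := by
  unfold rad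
  by_cases h1 : x ∈ S
  · simp [h1, Finset.mem_insert]
  · rw [if_neg h1]
    split <;> linarith

/-- vertex type -/
abbrev V (P : Finset Pt) := {x : Pt // x ∈ P}

lemma cdg_adj {r : Pt → ℝ} {a b : V P} :
    (closedDiskGraph P r).Adj a b ↔ a ≠ b ∧ dist (a : Pt) (b : Pt) ≤ r a + r b := Iff.rfl

lemma adj_mono (hα₁ : α ≤ 1) {w : Pt} {a b : V P}
    (h : (closedDiskGraph P (rad α (insert w S))).Adj a b) :
    (closedDiskGraph P (rad α S)).Adj a b :=
  ⟨h.1, h.2.trans (add_le_add (rad_insert_le hα₁ w _) (rad_insert_le hα₁ w _))⟩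

lemma adj_diff {w : Pt} {a b : V P}
    (hadj : (closedDiskGraph P (rad α S)).Adj a b)
    (hnadj : ¬ (closedDiskGraph P (rad α (insert w S))).Adj a b) :
    (a : Pt) = w ∨ (b : Pt) = w := by
  by_contra hc
  push_neg at hc
  exact hnadj ⟨hadj.1, by rw [rad_insert_ne hc.1, rad_insert_ne hc.2]; exact hadj.2⟩

lemma adj_trans (hα₁ : α ≤ 1) {w u : Pt} {a b : V P}
    (h : (closedDiskGraph P (rad α (insert w S))).Adj a b)
    (ha : (a : Pt) ≠ u) (hb : (b : Pt) ≠ u) :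
    (closedDiskGraph P (rad α (insert u S))).Adj a b := by
  refine ⟨h.1, h.2.trans ?_⟩
  rw [rad_insert_ne ha, rad_insert_ne hb]
  exact add_le_add (rad_insert_le hα₁ w _) (rad_insert_le hα₁ w _)

/-- the set of vertices cut off from vv when shrinking w -/
def Zset (P : Finset Pt) (α : ℝ) (S : Finset Pt) (vv : V P) (w : Pt) : Set (V P) :=
  {x | ¬ (closedDiskGraph P (rad α (insert w S))).Reachable x vv}

lemma not_mem_Zset {vv : V P} {w : Pt} {x : V P} (h : x ∉ Zset P α S vv w) :
    (closedDiskGraph P (rad α (insert w S))).Reachable x vv := not_not.mp h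

lemma vv_not_mem_Zset {vv : V P} {w : Pt} : vv ∉ Zset P α S vv w :=
  fun h => h (SimpleGraph.Reachable.refl vv)

lemma Zset_adj {vv : V P} {w : Pt} {a b : V P} (ha : a ∉ Zset P α S vv w)
    (hab : (closedDiskGraph P (rad α (insert w S))).Adj a b) : b ∉ Zset P α S vv w :=
  fun hb => hb ((hab.symm.reachable).trans (not_mem_Zset ha))

lemma exists_crossing_edge {Zs : Set (V P)} {r : Pt → ℝ} :
    ∀ {x y : V P} (_ : (closedDiskGraph P r).Walk x y), x ∉ Zs → y ∈ Zs →
    ∃ a b : V P, a ∉ Zs ∧ b ∈ Zs ∧ (closedDiskGraph P r).Adj a b := by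
  intro x y W
  induction W with
  | nil => intro hx hy; exact absurd hy hx
  | @cons x c y h q ih =>
    intro hx hy
    by_cases hc : c ∈ Zs
    · exact ⟨x, c, hx, hc, h⟩
    · exact ih hc hy

lemma walk_transfer (hα₁ : α ≤ 1) {w u : Pt} {vv : V P} :
    ∀ {x : V P} (W : (closedDiskGraph P (rad α (insert w S))).Walk x vv),
      (∀ y ∈ W.support, (y : Pt) ≠ u) →
      (closedDiskGraph P (rad α (insert u S))).Reachable x vv := by
  intro x W
  induction W with
  | nil => intro _; exact SimpleGraph.Reachable.refl _
  | @cons x c y h q ih =>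
    intro hsup
    have hx : (x : Pt) ≠ u := hsup x (SimpleGraph.Walk.start_mem_support _)
    have hc : (c : Pt) ≠ u := by
      refine hsup c ?_
      rw [SimpleGraph.Walk.support_cons]
      exact List.mem_cons_of_mem _ (SimpleGraph.Walk.start_mem_support q)
    refine ((adj_trans hα₁ h hx hc).reachable).trans (ih ?_)
    intro y hy
    refine hsup y ?_
    rw [SimpleGraph.Walk.support_cons]
    exact List.mem_cons_of_mem _ hy

lemma Zset_cont (hα₁ : α ≤ 1) {vv : V P} (w u : V P)
    (hu : u ∈ Zset P α S vv (w : Pt)) :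
    Zset P α S vv (u : Pt) ⊆ Zset P α S vv (w : Pt) := by
  intro x hx
  by_contra hxw
  obtain ⟨W⟩ := not_mem_Zset hxw
  have hsup : ∀ y ∈ W.support, (y : Pt) ≠ (u : Pt) := by
    intro y hy hyu
    have hr : (closedDiskGraph P (rad α (insert (w : Pt) S))).Reachable y vv :=
      ⟨W.dropUntil y hy⟩
    exact hu (Subtype.ext hyu ▸ hr)
  exact hx (walk_transfer hα₁ W hsup)

lemma exists_crossing (hconn : (closedDiskGraph P (rad α S)).Connected)
    {vv : V P} (w : Pt) (hz : ∃ z, z ∈ Zset P α S vv w) :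
    ∃ a b : V P, a ∉ Zset P α S vv w ∧ b ∈ Zset P α S vv w ∧
      (closedDiskGraph P (rad α S)).Adj a b ∧
      ¬ (closedDiskGraph P (rad α (insert w S))).Adj a b ∧
      ((a : Pt) = w ∨ (b : Pt) = w) := by
  obtain ⟨z, hz⟩ := hz
  obtain ⟨W⟩ := hconn.preconnected vv z
  obtain ⟨a, b, ha, hb, hab⟩ := exists_crossing_edge W vv_not_mem_Zset hz
  have hnadj : ¬ (closedDiskGraph P (rad α (insert w S))).Adj a b :=
    fun h => (Zset_adj ha h) hb
  exact ⟨a, b, ha, hb, hab, hnadj, adj_diff hab hnadj⟩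

/-- existence of the long pendant edge for a non-self-cut vertex -/
lemma exists_pendant (hα₁ : α ≤ 1) (hconn : (closedDiskGraph P (rad α S)).Connected)
    {vv : V P} (w : V P) (hwS : (w : Pt) ∉ S)
    (hC2 : w ∉ Zset P α S vv (w : Pt)) (hz : ∃ z, z ∈ Zset P α S vv (w : Pt)) :
    ∃ b : V P, b ∈ Zset P α S vv (w : Pt) ∧
      α + rad α S (b : Pt) < dist (w : Pt) (b : Pt) ∧
      dist (w : Pt) (b : Pt) ≤ 1 + rad α S (b : Pt) := by
  obtain ⟨a, b, ha, hb, hab, hnadj, hor⟩ := exists_crossing hconn (w : Pt) hz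
  have haw : a = w := by
    rcases hor with h | h
    · exact Subtype.ext h
    · exact absurd (Subtype.ext h ▸ hb) hC2
  subst haw
  have hne : a ≠ b := hab.1
  have hbw : (b : Pt) ≠ (a : Pt) := fun h => hne (Subtype.ext h.symm)
  refine ⟨b, hb, ?_, ?_⟩
  · by_contra hle
    push_neg at hle
    refine hnadj ⟨hne, ?_⟩
    rw [rad_insert_self, rad_insert_ne hbw]
    linarith
  · have := hab.2
    rwa [rad_notS hwS] at this

/-- two self-cut (case-2) vertices cannot be within distance 2α -/
lemma two_selfcut (hα₁ : α ≤ 1) (hconn : (closedDiskGraph P (rad α S)).Connected)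
    {vv : V P} (u w : V P) (huS : (u : Pt) ∉ S) (hwS : (w : Pt) ∉ S) (hne : u ≠ w)
    (hC2u : u ∈ Zset P α S vv (u : Pt)) (hC2w : w ∈ Zset P α S vv (w : Pt))
    (hd : dist (u : Pt) (w : Pt) ≤ 2 * α) : False := by
  have hcoe : (u : Pt) ≠ (w : Pt) := fun h => hne (Subtype.ext h)
  have hadjW : (closedDiskGraph P (rad α (insert (w : Pt) S))).Adj u w := by
    refine ⟨hne, ?_⟩
    rw [rad_insert_ne hcoe, rad_notS huS, rad_insert_self]
    linarith
  have hadjU : (closedDiskGraph P (rad α (insert (u : Pt) S))).Adj w u := by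
    refine ⟨hne.symm, ?_⟩
    rw [rad_insert_ne (fun h => hcoe h.symm), rad_notS hwS, rad_insert_self, dist_comm]
    linarith
  have huZw : u ∈ Zset P α S vv (w : Pt) := by
    by_contra hx
    exact (Zset_adj hx hadjW) hC2w
  have hwZu : w ∈ Zset P α S vv (u : Pt) := by
    by_contra hx
    exact (Zset_adj hx hadjU) hC2u
  have hZuw : Zset P α S vv (u : Pt) ⊆ Zset P α S vv (w : Pt) := Zset_cont hα₁ w u huZw
  have hZwu : Zset P α S vv (w : Pt) ⊆ Zset P α S vv (u : Pt) := Zset_cont hα₁ u w hwZu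
  obtain ⟨a, b, ha, hb, hab, hnadjw, horw⟩ := exists_crossing hconn (w : Pt) ⟨w, hC2w⟩
  have hbu : b ∈ Zset P α S vv (u : Pt) := hZwu hb
  have hau : a ∉ Zset P α S vv (u : Pt) := fun h => ha (hZuw h)
  have hnadju : ¬ (closedDiskGraph P (rad α (insert (u : Pt) S))).Adj a b :=
    fun h => (Zset_adj hau h) hbu
  have horu := adj_diff hab hnadju
  have haw : (a : Pt) ≠ (w : Pt) := fun h => ha (Subtype.ext h ▸ hC2w)
  have hau' : (a : Pt) ≠ (u : Pt) := fun h => hau (Subtype.ext h ▸ hC2u)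
  have hbw : (b : Pt) = (w : Pt) := horw.resolve_left haw
  have hbu' : (b : Pt) = (u : Pt) := horu.resolve_left hau'
  exact hcoe (hbu'.symm.trans hbw)

lemma bpair_help (hα₀ : 0 < α) (hα₁ : α ≤ 1)
    {vv : V P} (u w xu xw : V P) (huS : (u : Pt) ∉ S) (hne : u ≠ w)
    (hC2u : u ∉ Zset P α S vv (u : Pt)) (hC2w : w ∉ Zset P α S vv (w : Pt))
    (hxu1 : xu ∈ Zset P α S vv (u : Pt))
    (hxu2 : α + rad α S (xu : Pt) < dist (u : Pt) (xu : Pt))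
    (hxu3 : dist (u : Pt) (xu : Pt) ≤ 1 + rad α S (xu : Pt))
    (hxw1 : xw ∈ Zset P α S vv (w : Pt))
    (hxw2 : α + rad α S (xw : Pt) < dist (w : Pt) (xw : Pt))
    (huZw : u ∉ Zset P α S vv (w : Pt))
    (hd : dist (xu : Pt) (xw : Pt) ≤ 2 * α) : False := by
  have hradxu := rad_ge (S := S) hα₁ (xu : Pt)
  have hradxw := rad_ge (S := S) hα₁ (xw : Pt)
  have hcoe : (u : Pt) ≠ (w : Pt) := fun h => hne (Subtype.ext h)
  -- step 1 : xu ≠ w  (as points)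
  have s1 : (xu : Pt) ≠ (w : Pt) := by
    intro hh
    have hlt : α + rad α S (xw : Pt) < dist (xu : Pt) (xw : Pt) := by
      rw [hh]; exact hxw2
    linarith
  -- step 2 : xu ∉ Z w
  have s2 : xu ∉ Zset P α S vv (w : Pt) := by
    intro hin
    have huxu : u ≠ xu := fun h => hC2u (h ▸ hxu1)
    have hadj : (closedDiskGraph P (rad α S)).Adj u xu := by
      refine ⟨huxu, ?_⟩
      rw [rad_notS huS]
      exact hxu3
    have hnadj : ¬ (closedDiskGraph P (rad α (insert (w : Pt) S))).Adj u xu :=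
      fun h => (Zset_adj huZw h) hin
    rcases adj_diff hadj hnadj with h | h
    · exact hcoe h
    · exact s1 h
  -- step 3/4 : xu ≠ xw and they are adjacent
  have s3 : xu ≠ xw := fun h => s2 (h ▸ hxw1)
  have s4 : (closedDiskGraph P (rad α S)).Adj xu xw := by
    refine ⟨s3, ?_⟩
    linarith
  have s5 : ¬ (closedDiskGraph P (rad α (insert (w : Pt) S))).Adj xu xw :=
    fun h => (Zset_adj s2 h) hxw1
  rcases adj_diff s4 s5 with h | h
  · exact s1 h
  · exact hC2w (Subtype.ext h ▸ hxw1)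

lemma bpair (hα₀ : 0 < α) (hα₁ : α ≤ 1)
    {vv : V P} (u w xu xw : V P) (huS : (u : Pt) ∉ S) (hwS : (w : Pt) ∉ S) (hne : u ≠ w)
    (hC2u : u ∉ Zset P α S vv (u : Pt)) (hC2w : w ∉ Zset P α S vv (w : Pt))
    (hxu1 : xu ∈ Zset P α S vv (u : Pt))
    (hxu2 : α + rad α S (xu : Pt) < dist (u : Pt) (xu : Pt))
    (hxu3 : dist (u : Pt) (xu : Pt) ≤ 1 + rad α S (xu : Pt))
    (hxw1 : xw ∈ Zset P α S vv (w : Pt))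
    (hxw2 : α + rad α S (xw : Pt) < dist (w : Pt) (xw : Pt))
    (hxw3 : dist (w : Pt) (xw : Pt) ≤ 1 + rad α S (xw : Pt))
    (hd : dist (xu : Pt) (xw : Pt) ≤ 2 * α) : False := by
  by_cases huZw : u ∈ Zset P α S vv (w : Pt)
  · have hwZu : w ∉ Zset P α S vv (u : Pt) :=
      fun h => hC2w (Zset_cont hα₁ w u huZw h)
    exact bpair_help hα₀ hα₁ w u xw xu hwS hne.symm hC2w hC2u hxw1 hxw2 hxw3 hxu1 hxu2
      hwZu (by rwa [dist_comm] at hd)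
  · exact bpair_help hα₀ hα₁ u w xu xw huS hne hC2u hC2w hxu1 hxu2 hxu3 hxw1 hxw2 huZw hd

lemma coord_le (p q : Pt) (i : Fin 2) : |p i - q i| ≤ dist p q := by
  rw [EuclideanSpace.dist_eq]
  rw [show |p i - q i| = Real.sqrt ((p i - q i)^2) from (Real.sqrt_sq_eq_abs _).symm]
  apply Real.sqrt_le_sqrt
  have h := Finset.single_le_sum (f := fun j => dist (p j) (q j) ^ 2)
    (fun j _ => sq_nonneg _) (Finset.mem_univ i)
  simpa [Real.dist_eq, sq_abs] using h

lemma dist_le_two_alpha {α : ℝ} (hα₀ : 0 < α) (p q : Pt)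
    (h : ∀ i : Fin 2, |p i - q i| < α) : dist p q ≤ 2 * α := by
  rw [EuclideanSpace.dist_eq]
  have hsum : (∑ i, dist (p i) (q i) ^ 2) ≤ (2*α)^2 := by
    rw [Fin.sum_univ_two]
    have h0 := h 0
    have h1 := h 1
    rw [Real.dist_eq, Real.dist_eq]
    nlinarith [abs_nonneg (p 0 - q 0), abs_nonneg (p 1 - q 1), sq_abs (p 0 - q 0),
      sq_abs (p 1 - q 1)]
  calc Real.sqrt (∑ i, dist (p i) (q i) ^ 2) ≤ Real.sqrt ((2*α)^2) :=
        Real.sqrt_le_sqrt hsum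
    _ = 2*α := Real.sqrt_sq (by linarith)

lemma floor_eq_abs_lt {α a b : ℝ} (hα₀ : 0 < α) (h : ⌊a/α⌋ = ⌊b/α⌋) : |a - b| < α := by
  have hαne : α ≠ 0 := ne_of_gt hα₀
  have h1 : a/α < b/α + 1 := by
    calc a/α < ⌊a/α⌋ + 1 := Int.lt_floor_add_one _
      _ = ⌊b/α⌋ + 1 := by rw [h]
      _ ≤ b/α + 1 := by linarith [Int.floor_le (b/α)]
  have h2 : b/α < a/α + 1 := by
    calc b/α < ⌊b/α⌋ + 1 := Int.lt_floor_add_one _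
      _ = ⌊a/α⌋ + 1 := by rw [h]
      _ ≤ a/α + 1 := by linarith [Int.floor_le (a/α)]
  have ha : a/α*α = a := div_mul_cancel₀ a hαne
  have hb : b/α*α = b := div_mul_cancel₀ b hαne
  rw [abs_sub_lt_iff]
  constructor
  · nlinarith [mul_lt_mul_of_pos_right h1 hα₀]
  · nlinarith [mul_lt_mul_of_pos_right h2 hα₀]

lemma floor_range {α t : ℝ} (hα₀ : 0 < α) (ht : |t| ≤ 4) :
    ⌊t/α⌋ ∈ Finset.Icc ⌊(-4 : ℝ)/α⌋ ⌊(4 : ℝ)/α⌋ := by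
  rw [abs_le] at ht
  rw [Finset.mem_Icc]
  constructor
  · exact Int.floor_le_floor (by gcongr; exact ht.1)
  · exact Int.floor_le_floor (by gcongr; exact ht.2)

end Stmt17Aux

open Stmt17Aux

/-- For k-Shrinking to Connectivity: any maximum-cardinality solution contains all but
at most 9(4/α+1)² + 9 of the points of the closed neighborhood of any vertex v. -/
theorem stmt_17 (P : Finset Pt) (α : ℝ) (hα₀ : 0 < α) (hα₁ : α ≤ 1)
    (v : Pt) (hv : v ∈ P)
    (S : Finset Pt) (hSP : S ⊆ P)
    (hsol : (closedDiskGraph P (fun x => if x ∈ S then α else 1)).Connected)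
    (hmax : ∀ S' ⊆ P,
      (closedDiskGraph P (fun x => if x ∈ S' then α else 1)).Connected →
      S'.card ≤ S.card) :
    ((({u : Pt | u ∈ P ∧ dist u v ≤ 2} \ ↑S).ncard : ℝ)) ≤ 9 * (4 / α + 1) ^ 2 + 9 := by
  classical
  have hconn : (closedDiskGraph P (rad α S)).Connected := hsol
  set vv : V P := ⟨v, hv⟩ with hvvdef
  set TV : Finset (V P) := P.attach.filter (fun x => dist (x : Pt) v ≤ 2 ∧ (x : Pt) ∉ S)
    with hTV
  have hset : {u : Pt | u ∈ P ∧ dist u v ≤ 2} \ ↑S = ↑(TV.image Subtype.val) := by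
    ext u
    simp only [Finset.coe_image, Set.mem_image, Finset.mem_coe, hTV, Finset.mem_filter,
      Finset.mem_attach, true_and, Set.mem_diff, Set.mem_setOf_eq]
    constructor
    · rintro ⟨⟨hP, hd⟩, hS⟩
      exact ⟨⟨u, hP⟩, ⟨hd, hS⟩, rfl⟩
    · rintro ⟨x, ⟨hd, hS⟩, rfl⟩
      exact ⟨⟨x.2, hd⟩, hS⟩
  rw [hset, Set.ncard_coe_finset, Finset.card_image_of_injective _ Subtype.val_injective]
  -- every unshrunk vertex cuts the graph when shrunk (by maximality)
  have hZne : ∀ w : V P, (w : Pt) ∉ S → ∃ z, z ∈ Zset P α S vv (w : Pt) := by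
    intro w hwS
    have hnc : ¬ (closedDiskGraph P (rad α (insert (w : Pt) S))).Connected := by
      intro hc
      have hcard := hmax (insert (w : Pt) S) (Finset.insert_subset_iff.mpr ⟨w.2, hSP⟩) hc
      rw [Finset.card_insert_of_notMem hwS] at hcard
      omega
    by_contra hne
    push_neg at hne
    have : Nonempty (V P) := ⟨vv⟩
    exact hnc ⟨fun x y => (not_mem_Zset (hne x)).trans (not_mem_Zset (hne y)).symm⟩
  -- choose pendants
  have hpend : ∀ w : V P, ∃ b : V P,
      ((w : Pt) ∉ S ∧ w ∉ Zset P α S vv (w : Pt)) →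
      (b ∈ Zset P α S vv (w : Pt) ∧
        α + rad α S (b : Pt) < dist (w : Pt) (b : Pt) ∧
        dist (w : Pt) (b : Pt) ≤ 1 + rad α S (b : Pt)) := by
    intro w
    by_cases h : (w : Pt) ∉ S ∧ w ∉ Zset P α S vv (w : Pt)
    · obtain ⟨b, hb⟩ := exists_pendant hα₁ hconn w h.1 h.2 (hZne w h.1)
      exact ⟨b, fun _ => hb⟩
    · exact ⟨w, fun hh => absurd hh h⟩
  choose f hf using hpend
  let yy : V P → Pt := fun w => if w ∈ Zset P α S vv (w : Pt) then (w : Pt) else (f w : Pt)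
  have hyd : ∀ w : V P, dist (w : Pt) v ≤ 2 → (w : Pt) ∉ S → dist (yy w) v ≤ 4 := by
    intro w hw hwS
    by_cases h : w ∈ Zset P α S vv (w : Pt)
    · rw [show yy w = (w : Pt) from if_pos h]; linarith
    · rw [show yy w = (f w : Pt) from if_neg h]
      have hQ := hf w ⟨hwS, h⟩
      have h3 := hQ.2.2
      have hr := rad_le (S := S) hα₁ (f w : Pt)
      calc dist (f w : Pt) v ≤ dist (f w : Pt) (w : Pt) + dist (w : Pt) v :=
            dist_triangle _ _ _
        _ ≤ (1 + rad α S (f w : Pt)) + 2 :=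
            add_le_add (by rw [dist_comm]; exact h3) hw
        _ ≤ 4 := by linarith
  set lo : ℤ := ⌊(-4 : ℝ)/α⌋ with hlo
  set hi : ℤ := ⌊(4 : ℝ)/α⌋ with hhi
  set F : V P → ℤ × ℤ × Bool := fun w =>
    (⌊(yy w 0 - v 0)/α⌋, ⌊(yy w 1 - v 1)/α⌋,
      if w ∈ Zset P α S vv (w : Pt) then true else false) with hF
  have hmaps : ∀ w ∈ TV,
      F w ∈ (Finset.Icc lo hi) ×ˢ ((Finset.Icc lo hi) ×ˢ (Finset.univ : Finset Bool)) := by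
    intro w hw
    rw [hTV, Finset.mem_filter] at hw
    obtain ⟨-, hd2, hwS⟩ := hw
    have h4 := hyd w hd2 hwS
    simp only [Finset.mem_product]
    refine ⟨?_, ?_, Finset.mem_univ _⟩
    · exact floor_range hα₀ ((coord_le (yy w) v 0).trans h4)
    · exact floor_range hα₀ ((coord_le (yy w) v 1).trans h4)
  have hinj : Set.InjOn F ↑TV := by
    intro u hu w hw hFeq
    by_contra hne
    have hu' := Finset.mem_coe.mp hu
    have hw' := Finset.mem_coe.mp hw
    rw [hTV, Finset.mem_filter] at hu' hw'
    obtain ⟨-, hud, huS⟩ := hu'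
    obtain ⟨-, hwd, hwS⟩ := hw'
    have htag : (if u ∈ Zset P α S vv (u : Pt) then true else false)
        = (if w ∈ Zset P α S vv (w : Pt) then true else false) :=
      congrArg (fun t => t.2.2) hFeq
    have hc0 : ⌊(yy u 0 - v 0)/α⌋ = ⌊(yy w 0 - v 0)/α⌋ := congrArg (fun t => t.1) hFeq
    have hc1 : ⌊(yy u 1 - v 1)/α⌋ = ⌊(yy w 1 - v 1)/α⌋ := congrArg (fun t => t.2.1) hFeq
    have habs0 := floor_eq_abs_lt hα₀ hc0
    have habs1 := floor_eq_abs_lt hα₀ hc1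
    rw [sub_sub_sub_cancel_right] at habs0 habs1
    have hdyy : dist (yy u) (yy w) ≤ 2*α := by
      apply dist_le_two_alpha hα₀
      intro i
      fin_cases i
      · exact habs0
      · exact habs1
    by_cases hC2u : u ∈ Zset P α S vv (u : Pt)
    · have hC2w : w ∈ Zset P α S vv (w : Pt) := by
        by_contra h
        rw [if_pos hC2u, if_neg h] at htag
        exact Bool.noConfusion htag
      rw [show yy u = (u : Pt) from if_pos hC2u,
        show yy w = (w : Pt) from if_pos hC2w] at hdyy
      exact two_selfcut hα₁ hconn u w huS hwS hne hC2u hC2w hdyy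
    · have hC2w : w ∉ Zset P α S vv (w : Pt) := by
        intro h
        rw [if_neg hC2u, if_pos h] at htag
        exact Bool.noConfusion htag
      rw [show yy u = (f u : Pt) from if_neg hC2u,
        show yy w = (f w : Pt) from if_neg hC2w] at hdyy
      have hQu := hf u ⟨huS, hC2u⟩
      have hQw := hf w ⟨hwS, hC2w⟩
      exact bpair hα₀ hα₁ u w (f u) (f w) huS hwS hne hC2u hC2w hQu.1 hQu.2.1 hQu.2.2
        hQw.1 hQw.2.1 hQw.2.2 hdyy
  have hcard := Finset.card_le_card_of_injOn F hmaps hinj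
  have htgt : ((Finset.Icc lo hi) ×ˢ ((Finset.Icc lo hi) ×ˢ (Finset.univ : Finset Bool))).card
      = (hi + 1 - lo).toNat * ((hi + 1 - lo).toNat * 2) := by
    rw [Finset.card_product, Finset.card_product, Int.card_Icc, Finset.card_univ,
      Fintype.card_bool]
  have hloB : (-4 : ℝ)/α - 1 < (lo : ℝ) := Int.sub_one_lt_floor _
  have hhiB : (hi : ℝ) ≤ (4 : ℝ)/α := Int.floor_le _
  have hlohi : lo ≤ hi := Int.floor_le_floor (by gcongr <;> norm_num)
  have hK : ((hi + 1 - lo).toNat : ℝ) ≤ 8/α + 2 := by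
    have h1 : ((hi + 1 - lo).toNat : ℤ) = hi + 1 - lo := Int.toNat_of_nonneg (by omega)
    have h2 : ((hi + 1 - lo).toNat : ℝ) = (hi : ℝ) + 1 - (lo : ℝ) := by
      exact_mod_cast congrArg (fun z : ℤ => (z : ℝ)) h1
    rw [h2]
    have e1 : (8 : ℝ)/α = 4/α + 4/α := by ring
    have e2 : (-4 : ℝ)/α = -(4/α) := by ring
    linarith
  have hTVcard : (TV.card : ℝ) ≤ (8/α + 2) * ((8/α + 2) * 2) := by
    have hc2 : TV.card ≤ (hi + 1 - lo).toNat * ((hi + 1 - lo).toNat * 2) :=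
      hcard.trans_eq htgt
    have h0 : (0:ℝ) ≤ ((hi + 1 - lo).toNat : ℝ) := Nat.cast_nonneg _
    have hc3 : (TV.card : ℝ) ≤ ((hi + 1 - lo).toNat : ℝ) * (((hi + 1 - lo).toNat : ℝ) * 2) := by
      exact_mod_cast hc2
    nlinarith [hK]
  have hinv : (1:ℝ) ≤ 1/α := by rw [le_div_iff₀ hα₀]; linarith
  have hinv0 : (0:ℝ) < 1/α := by positivity
  calc (TV.card : ℝ) ≤ (8/α + 2) * ((8/α + 2) * 2) := hTVcard
    _ ≤ 9 * (4 / α + 1) ^ 2 + 9 := by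
      have h8 : (8:ℝ)/α = 8 * (1/α) := by ring
      have h4 : (4:ℝ)/α = 4 * (1/α) := by ring
      rw [h8, h4]
      nlinarith [hinv, hinv0]
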